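/- For the quantum Tsallis entropy S_q(ρ) = (Tr(ρ^q) - 1)/(1-q) with q ∈ (1,∞) and density matrices ρ₁, ρ₂ with trace distance T = T(ρ₁,ρ₂), the continuity bound |S_q(ρ₁) - S_q(ρ₂)| ≤ (2q/(q-1))·T holds. -/

import Mathlib

open Matrix
open scoped ComplexOrder

/-- The trace norm `‖A‖₁ = Tr √(Aᴴ A)`. -/
noncomputable def traceNorm {n : Type*} [Fintype n] [DecidableEq n]
    (A : Matrix n n ℂ) : ℝ :=
  ((Matrix.posSemidef_conjTranspose_mul_self A).1.eigenvectorUnitary.1 *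
    diagonal (((↑) : ℝ → ℂ) ∘ (√·) ∘ (Matrix.posSemidef_conjTranspose_mul_self A).1.eigenvalues) *
    (star (Matrix.posSemidef_conjTranspose_mul_self A).1.eigenvectorUnitary :
      Matrix n n ℂ)).trace.re

/-- The trace distance `T(ρ,σ) = ‖ρ - σ‖₁ / 2`. -/
noncomputable def traceDist {n : Type*} [Fintype n] [DecidableEq n]
    (ρ σ : Matrix n n ℂ) : ℝ :=
  traceNorm (ρ - σ) / 2

/-- The quantum Tsallis entropy `S_q(ρ) = (Tr(ρ^q) - 1)/(1 - q)`, expressed via the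
eigenvalues of the Hermitian matrix `ρ`: `Tr(ρ^q) = ∑ λᵢ^q` (real power). -/
noncomputable def tsallisEntropy {d : ℕ} (q : ℝ)
    (ρ : Matrix (Fin d) (Fin d) ℂ) (hρ : ρ.IsHermitian) : ℝ :=
  ((∑ i, (hρ.eigenvalues i) ^ q) - 1) / (1 - q)

section Auxiliary

variable {d : ℕ}

-- scalar Bernoulli-type inequality
lemma scalar_convex {q a b : ℝ} (hq : 1 < q) (ha : 0 ≤ a) (hb : 0 ≤ b) :
    a ^ q - b ^ q ≤ q * a ^ (q - 1) * (a - b) := by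
  rcases eq_or_lt_of_le ha with rfl | ha'
  · rw [Real.zero_rpow (by linarith), Real.zero_rpow (by linarith)]
    simp only [mul_zero, zero_mul, zero_sub, neg_nonpos]
    positivity
  · have hs : -1 ≤ b / a - 1 := by
      have : 0 ≤ b / a := div_nonneg hb ha'.le
      linarith
    have hber := one_add_mul_self_le_rpow_one_add hs hq.le
    rw [add_sub_cancel] at hber
    have h1 : (b / a) ^ q * a ^ q = b ^ q := by
      rw [← Real.mul_rpow (div_nonneg hb ha'.le) ha, div_mul_cancel₀ _ (ne_of_gt ha')]
    have h2 : a ^ q = a ^ (q - 1) * a := by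
      rw [← Real.rpow_add_one (ne_of_gt ha'), sub_add_cancel]
    have h3 : (1 + q * (b / a - 1)) * a ^ q ≤ (b / a) ^ q * a ^ q :=
      mul_le_mul_of_nonneg_right hber (Real.rpow_nonneg ha q)
    rw [h1] at h3
    have h4 : (1 + q * (b / a - 1)) * a ^ q = a ^ q + q * ((b - a) * a ^ (q - 1)) := by
      rw [h2]; field_simp
    rw [h4] at h3
    linarith

-- sqrt congruence
lemma sqrt_congr {M N : Matrix (Fin d) (Fin d) ℂ} (hM : M.PosSemidef) (hN : N.PosSemidef)
    (h : M = N) :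
    (hM.1.eigenvectorUnitary.1 * diagonal (((↑) : ℝ → ℂ) ∘ (√·) ∘ hM.1.eigenvalues) *
      (star hM.1.eigenvectorUnitary : Matrix (Fin d) (Fin d) ℂ)) =
    (hN.1.eigenvectorUnitary.1 * diagonal (((↑) : ℝ → ℂ) ∘ (√·) ∘ hN.1.eigenvalues) *
      (star hN.1.eigenvectorUnitary : Matrix (Fin d) (Fin d) ℂ)) := by subst h; rfl

-- trace of unitary conjugation
lemma trace_unitary_conj {U D : Matrix (Fin d) (Fin d) ℂ} (hU : U ∈ unitaryGroup (Fin d) ℂ) :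
    (U * D * star U).trace = D.trace := by
  rw [trace_mul_cycle, (mem_unitaryGroup_iff'.mp hU), one_mul]

-- sum of eigenvalues = re trace
lemma sum_eigenvalues_eq {A : Matrix (Fin d) (Fin d) ℂ} (hA : A.IsHermitian) :
    ∑ i, hA.eigenvalues i = A.trace.re := by
  conv_rhs => rw [hA.spectral_theorem]
  rw [Unitary.conjStarAlgAut_apply, trace_unitary_conj (hA.eigenvectorUnitary).2, trace_diagonal]
  simp

-- rows of a unitary have unit norm
lemma unitary_row_sum {V : Matrix (Fin d) (Fin d) ℂ} (hV : V ∈ unitaryGroup (Fin d) ℂ) (i : Fin d) :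
    ∑ j, Complex.normSq (V i j) = 1 := by
  have h := mem_unitaryGroup_iff.mp hV
  have := congrFun (congrFun h i) i
  rw [mul_apply, one_apply_eq] at this
  have : (∑ j, V i j * star (V i j)) = 1 := this
  simp only [RCLike.star_def, Complex.mul_conj] at this
  exact_mod_cast this

lemma unitary_col_sum {V : Matrix (Fin d) (Fin d) ℂ} (hV : V ∈ unitaryGroup (Fin d) ℂ) (j : Fin d) :
    ∑ i, Complex.normSq (V i j) = 1 := by
  have h := mem_unitaryGroup_iff'.mp hV
  have := congrFun (congrFun h j) j
  rw [mul_apply, one_apply_eq] at this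
  have : (∑ i, star (V i j) * V i j) = 1 := this
  simp only [RCLike.star_def, mul_comm, Complex.mul_conj] at this
  exact_mod_cast this

lemma trace_dvdv (V : Matrix (Fin d) (Fin d) ℂ) (c v : Fin d → ℝ) :
    (diagonal (Complex.ofReal ∘ c) * V * diagonal (Complex.ofReal ∘ v) * star V).trace
    = ∑ i, ∑ j, ((c i * v j * Complex.normSq (V i j) : ℝ) : ℂ) := by
  have hentry : ∀ i j, (diagonal (Complex.ofReal ∘ c) * V * diagonal (Complex.ofReal ∘ v)) i j
      = Complex.ofReal (c i) * V i j * Complex.ofReal (v j) := by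
    intro i j
    rw [Matrix.mul_diagonal, Matrix.diagonal_mul]
    rfl
  simp only [Matrix.trace, Matrix.diag, mul_apply (M := diagonal (Complex.ofReal ∘ c) * V * diagonal (Complex.ofReal ∘ v)), hentry, star_apply, RCLike.star_def]
  refine Finset.sum_congr rfl fun i _ => Finset.sum_congr rfl fun j _ => ?_
  rw [show ((Complex.ofReal (c i) * V i j) * Complex.ofReal (v j)) * (starRingEnd ℂ) (V i j)
      = Complex.ofReal (c i) * Complex.ofReal (v j) * (V i j * (starRingEnd ℂ) (V i j)) by ring,
    Complex.mul_conj]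
  push_cast
  ring

lemma key_trace {U W : Matrix (Fin d) (Fin d) ℂ} (c v : Fin d → ℝ) :
    ((U * diagonal (Complex.ofReal ∘ c) * star U) * (W * diagonal (Complex.ofReal ∘ v) * star W)).trace.re
    = ∑ i, ∑ j, c i * v j * Complex.normSq ((star U * W) i j) := by
  have e1 : (U * diagonal (Complex.ofReal ∘ c) * star U) * (W * diagonal (Complex.ofReal ∘ v) * star W)
      = U * (diagonal (Complex.ofReal ∘ c) * (star U * (W * (diagonal (Complex.ofReal ∘ v) * star W)))) := by
    simp only [mul_assoc]
  have e2 : diagonal (Complex.ofReal ∘ c) * (star U * W) * diagonal (Complex.ofReal ∘ v) * star (star U * W)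
      = diagonal (Complex.ofReal ∘ c) * (star U * (W * (diagonal (Complex.ofReal ∘ v) * (star W * U)))) := by
    rw [Matrix.star_mul, star_star]
    simp only [mul_assoc]
  rw [e1, trace_mul_comm]
  rw [show (diagonal (Complex.ofReal ∘ c) * (star U * (W * (diagonal (Complex.ofReal ∘ v) * star W)))) * U
      = diagonal (Complex.ofReal ∘ c) * (star U * (W * (diagonal (Complex.ofReal ∘ v) * (star W * U)))) by
    simp only [mul_assoc]]
  rw [← e2, trace_dvdv]
  simp

lemma conj_mul_conj {U : Matrix (Fin d) (Fin d) ℂ} (hU : U ∈ unitaryGroup (Fin d) ℂ)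
    (c v : Fin d → ℂ) :
    (U * diagonal c * star U) * (U * diagonal v * star U)
      = U * diagonal (fun i => c i * v i) * star U := by
  have h1 : star U * U = 1 := mem_unitaryGroup_iff'.mp hU
  simp only [mul_assoc]
  rw [show star U * (U * (diagonal v * star U)) = diagonal v * star U by
    rw [← mul_assoc, h1, one_mul]]
  rw [show diagonal c * (diagonal v * star U) = diagonal (fun i => c i * v i) * star U by
    rw [← mul_assoc, diagonal_mul_diagonal]]

lemma traceNorm_eq_cfc (A : Matrix (Fin d) (Fin d) ℂ) :
    traceNorm A = (cfc Real.sqrt (Aᴴ * A)).trace.re := by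
  rw [traceNorm, (posSemidef_conjTranspose_mul_self A).1.cfc_eq, IsHermitian.cfc,
    Unitary.conjStarAlgAut_apply]
  rfl

open scoped MatrixOrder in
lemma traceNorm_hermitian (A : Matrix (Fin d) (Fin d) ℂ) (hA : A.IsHermitian) :
    traceNorm A = ∑ i, |hA.eigenvalues i| := by
  set U : Matrix (Fin d) (Fin d) ℂ := (hA.eigenvectorUnitary : Matrix (Fin d) (Fin d) ℂ) with hUdef
  have hU : U ∈ unitaryGroup (Fin d) ℂ := hA.eigenvectorUnitary.2
  set M : Matrix (Fin d) (Fin d) ℂ :=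
    U * diagonal (Complex.ofReal ∘ fun i => |hA.eigenvalues i|) * star U with hMdef
  have hdiag : (diagonal (Complex.ofReal ∘ fun i => |hA.eigenvalues i|)).PosSemidef := by
    rw [posSemidef_diagonal_iff]
    intro i
    simp only [Function.comp]
    exact_mod_cast abs_nonneg _
  have hM : M.PosSemidef := by
    rw [hMdef, Matrix.star_eq_conjTranspose]
    exact hdiag.mul_mul_conjTranspose_same U
  have hspec : A = U * diagonal (Complex.ofReal ∘ hA.eigenvalues) * star U := by
    conv_lhs => rw [hA.spectral_theorem]
    rfl
  have hsq : M ^ 2 = Aᴴ * A := by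
    rw [pow_two, hMdef, conj_mul_conj hU, hA.eq]
    conv_rhs => rw [hspec]
    rw [conj_mul_conj hU]
    have habs : (fun i => ((Complex.ofReal ∘ fun i => |hA.eigenvalues i|) i)
          * ((Complex.ofReal ∘ fun i => |hA.eigenvalues i|) i))
        = fun i => ((Complex.ofReal ∘ hA.eigenvalues) i) * ((Complex.ofReal ∘ hA.eigenvalues) i) := by
      funext i
      simp only [Function.comp_apply]
      rw [← Complex.ofReal_mul, ← Complex.ofReal_mul, abs_mul_abs_self]
    rw [habs]
  have hsqrt : M = cfc Real.sqrt (Aᴴ * A) := by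
    have h0 : (0 : Matrix (Fin d) (Fin d) ℂ) ≤ Aᴴ * A :=
      nonneg_iff_posSemidef.mpr (posSemidef_conjTranspose_mul_self A)
    rw [← cfcₙ_eq_cfc (f := Real.sqrt) (a := Aᴴ * A) (hf0 := Real.sqrt_zero), ← CFC.sqrt_eq_real_sqrt _ h0]
    exact (CFC.sqrt_unique (by rw [← pow_two]; exact hsq) (nonneg_iff_posSemidef.mpr hM)).symm
  rw [traceNorm_eq_cfc, ← hsqrt, hMdef, trace_unitary_conj hU, trace_diagonal]
  simp

lemma onesided {q : ℝ} (hq : 1 < q) (ρ₁ ρ₂ : Matrix (Fin d) (Fin d) ℂ)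
    (hρ₁ : ρ₁.PosSemidef) (h₁ : ρ₁.trace = 1) (hρ₂ : ρ₂.PosSemidef) (h₂ : ρ₂.trace = 1)
    (hΔ : (ρ₁ - ρ₂).IsHermitian) :
    ∑ i, (hρ₁.1.eigenvalues i) ^ q - ∑ i, (hρ₂.1.eigenvalues i) ^ q
      ≤ q * ∑ j, |hΔ.eigenvalues j| := by
  set a := hρ₁.1.eigenvalues with hadef
  set b := hρ₂.1.eigenvalues with hbdef
  set ν := hΔ.eigenvalues with hvdef
  set U : Matrix (Fin d) (Fin d) ℂ := (hρ₁.1.eigenvectorUnitary : Matrix (Fin d) (Fin d) ℂ)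
  set V : Matrix (Fin d) (Fin d) ℂ := (hρ₂.1.eigenvectorUnitary : Matrix (Fin d) (Fin d) ℂ)
  set W : Matrix (Fin d) (Fin d) ℂ := (hΔ.eigenvectorUnitary : Matrix (Fin d) (Fin d) ℂ)
  have hU : U ∈ unitaryGroup (Fin d) ℂ := hρ₁.1.eigenvectorUnitary.2
  have hV : V ∈ unitaryGroup (Fin d) ℂ := hρ₂.1.eigenvectorUnitary.2
  have hW : W ∈ unitaryGroup (Fin d) ℂ := hΔ.eigenvectorUnitary.2
  have ha0 : ∀ i, 0 ≤ a i := fun i => hρ₁.eigenvalues_nonneg i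
  have hb0 : ∀ i, 0 ≤ b i := fun i => hρ₂.eigenvalues_nonneg i
  have hasum : ∑ i, a i = 1 := by
    rw [hadef, sum_eigenvalues_eq, h₁, Complex.one_re]
  have ha1 : ∀ i, a i ≤ 1 := by
    intro i
    rw [← hasum]
    exact Finset.single_le_sum (fun j _ => ha0 j) (Finset.mem_univ i)
  set c : Fin d → ℝ := fun i => q * a i ^ (q - 1) with hcdef
  have hc0 : ∀ i, 0 ≤ c i := fun i =>
    mul_nonneg (by linarith) (Real.rpow_nonneg (ha0 i) _)
  have hcq : ∀ i, c i ≤ q := by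
    intro i
    have h1 : a i ^ (q - 1) ≤ 1 := Real.rpow_le_one (ha0 i) (ha1 i) (by linarith)
    calc c i ≤ q * 1 := mul_le_mul_of_nonneg_left h1 (by linarith)
    _ = q := mul_one q
  set p : Fin d → Fin d → ℝ := fun i j => Complex.normSq ((star U * V) i j) with hpdef
  set r : Fin d → Fin d → ℝ := fun i j => Complex.normSq ((star U * W) i j) with hrdef
  have hUV : star U * V ∈ unitaryGroup (Fin d) ℂ := mul_mem (Unitary.star_mem hU) hV
  have hUW : star U * W ∈ unitaryGroup (Fin d) ℂ := mul_mem (Unitary.star_mem hU) hW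
  have hp0 : ∀ i j, 0 ≤ p i j := fun i j => Complex.normSq_nonneg _
  have hr0 : ∀ i j, 0 ≤ r i j := fun i j => Complex.normSq_nonneg _
  have hprow : ∀ i, ∑ j, p i j = 1 := unitary_row_sum hUV
  have hpcol : ∀ j, ∑ i, p i j = 1 := unitary_col_sum hUV
  have hrcol : ∀ j, ∑ i, r i j = 1 := unitary_col_sum hUW
  have hspec₁ : ρ₁ = U * diagonal (Complex.ofReal ∘ a) * star U := by
    conv_lhs => rw [hρ₁.1.spectral_theorem]
    rfl
  have hspec₂ : ρ₂ = V * diagonal (Complex.ofReal ∘ b) * star V := by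
    conv_lhs => rw [hρ₂.1.spectral_theorem]
    rfl
  have hspecΔ : ρ₁ - ρ₂ = W * diagonal (Complex.ofReal ∘ ν) * star W := by
    conv_lhs => rw [hΔ.spectral_theorem]
    rfl
  set C : Matrix (Fin d) (Fin d) ℂ := U * diagonal (Complex.ofReal ∘ c) * star U with hCdef
  -- step 1: rewrite entropy difference via double sums
  have step1 : ∑ i, a i ^ q - ∑ i, b i ^ q = ∑ i, ∑ j, p i j * (a i ^ q - b j ^ q) := by
    have e1 : ∑ i, a i ^ q = ∑ i, ∑ j, p i j * a i ^ q := by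
      refine Finset.sum_congr rfl fun i _ => ?_
      rw [← Finset.sum_mul, hprow i, one_mul]
    have e2 : ∑ j, b j ^ q = ∑ i, ∑ j, p i j * b j ^ q := by
      rw [Finset.sum_comm]
      refine Finset.sum_congr rfl fun j _ => ?_
      rw [← Finset.sum_mul, hpcol j, one_mul]
    rw [e1, e2, ← Finset.sum_sub_distrib]
    refine Finset.sum_congr rfl fun i _ => ?_
    rw [← Finset.sum_sub_distrib]
    refine Finset.sum_congr rfl fun j _ => ?_
    ring
  -- step 2: convexity bound
  have step2 : ∑ i, ∑ j, p i j * (a i ^ q - b j ^ q) ≤ ∑ i, ∑ j, p i j * (c i * (a i - b j)) := by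
    refine Finset.sum_le_sum fun i _ => Finset.sum_le_sum fun j _ => ?_
    refine mul_le_mul_of_nonneg_left ?_ (hp0 i j)
    have := scalar_convex hq (ha0 i) (hb0 j)
    calc a i ^ q - b j ^ q ≤ q * a i ^ (q - 1) * (a i - b j) := this
    _ = c i * (a i - b j) := by rw [hcdef]
  -- step 3: identification with traces
  have keyρ₂ : (C * ρ₂).trace.re = ∑ i, ∑ j, c i * b j * p i j := by
    rw [hCdef]
    conv_lhs => rw [hspec₂]
    rw [key_trace]
  have keyρ₁ : (C * ρ₁).trace.re = ∑ i, c i * a i := by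
    rw [hCdef]
    conv_lhs => rw [hspec₁]
    rw [key_trace, mem_unitaryGroup_iff'.mp hU]
    refine Finset.sum_congr rfl fun i _ => ?_
    rw [Finset.sum_eq_single i]
    · rw [one_apply_eq]
      simp
    · intro j _ hji
      rw [one_apply_ne' hji]
      simp
    · simp
  have keyΔ : (C * (ρ₁ - ρ₂)).trace.re = ∑ i, ∑ j, c i * ν j * r i j := by
    rw [hCdef]
    conv_lhs => rw [hspecΔ]
    rw [key_trace]
  have step3 : ∑ i, ∑ j, p i j * (c i * (a i - b j))
      = (C * ρ₁).trace.re - (C * ρ₂).trace.re := by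
    rw [keyρ₁, keyρ₂, ← Finset.sum_sub_distrib]
    refine Finset.sum_congr rfl fun i _ => ?_
    have : c i * a i = ∑ j, p i j * (c i * a i) := by
      rw [← Finset.sum_mul, hprow i, one_mul]
    rw [this, ← Finset.sum_sub_distrib]
    refine Finset.sum_congr rfl fun j _ => ?_
    ring
  have step4 : (C * ρ₁).trace.re - (C * ρ₂).trace.re = (C * (ρ₁ - ρ₂)).trace.re := by
    rw [mul_sub, trace_sub, Complex.sub_re]
  -- step 5: final bound
  have step5 : ∑ i, ∑ j, c i * ν j * r i j ≤ q * ∑ j, |ν j| := by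
    have e : ∀ i j, c i * ν j * r i j ≤ q * |ν j| * r i j := by
      intro i j
      refine mul_le_mul_of_nonneg_right ?_ (hr0 i j)
      calc c i * ν j ≤ c i * |ν j| := mul_le_mul_of_nonneg_left (le_abs_self _) (hc0 i)
      _ ≤ q * |ν j| := mul_le_mul_of_nonneg_right (hcq i) (abs_nonneg _)
    calc ∑ i, ∑ j, c i * ν j * r i j ≤ ∑ i, ∑ j, q * |ν j| * r i j :=
          Finset.sum_le_sum fun i _ => Finset.sum_le_sum fun j _ => e i j
    _ = ∑ j, ∑ i, q * |ν j| * r i j := Finset.sum_comm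
    _ = ∑ j, q * |ν j| := by
        refine Finset.sum_congr rfl fun j _ => ?_
        rw [← Finset.mul_sum, hrcol j, mul_one]
    _ = q * ∑ j, |ν j| := by rw [Finset.mul_sum]
  calc ∑ i, a i ^ q - ∑ i, b i ^ q
      = ∑ i, ∑ j, p i j * (a i ^ q - b j ^ q) := step1
    _ ≤ ∑ i, ∑ j, p i j * (c i * (a i - b j)) := step2
    _ = (C * ρ₁).trace.re - (C * ρ₂).trace.re := step3
    _ = (C * (ρ₁ - ρ₂)).trace.re := step4
    _ = ∑ i, ∑ j, c i * ν j * r i j := keyΔ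
    _ ≤ q * ∑ j, |ν j| := step5

end Auxiliary

theorem tsallis_continuity_bound {d : ℕ} (q : ℝ) (hq : 1 < q)
    (ρ₁ ρ₂ : Matrix (Fin d) (Fin d) ℂ)
    (hρ₁ : ρ₁.PosSemidef) (h₁ : ρ₁.trace = 1)
    (hρ₂ : ρ₂.PosSemidef) (h₂ : ρ₂.trace = 1) :
    |tsallisEntropy q ρ₁ hρ₁.1 - tsallisEntropy q ρ₂ hρ₂.1| ≤
      (2 * q / (q - 1)) * traceDist ρ₁ ρ₂ := by
  have hq1 : (0 : ℝ) < q - 1 := by linarith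
  have hΔ : (ρ₁ - ρ₂).IsHermitian := hρ₁.1.sub hρ₂.1
  have hΔ' : (ρ₂ - ρ₁).IsHermitian := hρ₂.1.sub hρ₁.1
  set X := ∑ i, (hρ₁.1.eigenvalues i) ^ q - ∑ i, (hρ₂.1.eigenvalues i) ^ q with hXdef
  have b1 : X ≤ q * traceNorm (ρ₁ - ρ₂) := by
    rw [traceNorm_hermitian _ hΔ]
    exact onesided hq ρ₁ ρ₂ hρ₁ h₁ hρ₂ h₂ hΔ
  have htn : traceNorm (ρ₂ - ρ₁) = traceNorm (ρ₁ - ρ₂) := by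
    have hm : (ρ₂ - ρ₁)ᴴ * (ρ₂ - ρ₁) = (ρ₁ - ρ₂)ᴴ * (ρ₁ - ρ₂) := by
      rw [show ρ₂ - ρ₁ = -(ρ₁ - ρ₂) from (neg_sub _ _).symm, conjTranspose_neg, neg_mul_neg]
    unfold traceNorm
    rw [sqrt_congr (posSemidef_conjTranspose_mul_self _) (posSemidef_conjTranspose_mul_self _) hm]
  have b2 : -X ≤ q * traceNorm (ρ₁ - ρ₂) := by
    rw [← htn, traceNorm_hermitian _ hΔ']
    have h := onesided hq ρ₂ ρ₁ hρ₂ h₂ hρ₁ h₁ hΔ'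
    rw [hXdef]
    linarith
  have habs : |X| ≤ q * traceNorm (ρ₁ - ρ₂) := abs_le.mpr ⟨by linarith, b1⟩
  have hent : tsallisEntropy q ρ₁ hρ₁.1 - tsallisEntropy q ρ₂ hρ₂.1 = -X / (q - 1) := by
    rw [tsallisEntropy, tsallisEntropy, hXdef]
    have h1q : (1 : ℝ) - q ≠ 0 := by linarith
    field_simp
    ring
  rw [hent, abs_div, abs_neg, abs_of_pos hq1, traceDist]
  rw [show 2 * q / (q - 1) * (traceNorm (ρ₁ - ρ₂) / 2) = q * traceNorm (ρ₁ - ρ₂) / (q - 1) by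
    field_simp]
  exact (div_le_div_iff_of_pos_right hq1).mpr habs
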